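/- arXiv:1402.5705 — 5 statements merged into one kernel-verified Lean document; each statement's English description precedes it below -/
import Mathlib

section
/- For each a ∈ {1, 2, 3}, the subspace H is invariant under θ_a and θ_a² X = X for all X ∈ H; consequently the restriction θ_a|_H is a symmetric involution whose only possible eigenvalues are 1 and −1, and H is the orthogonal direct sum of the eigenspaces H_a(1) and H_a(−1). -/
open RealInnerProductSpace

/-- An almost contact metric structure `(φ, ξ, η)` together with an almost contact metric
3-structure `(φ_a, ξ_a, η_a)`, `a ∈ {1,2,3}` (indices mod 3), on a real inner product space `V`,
modelling the structures induced on the tangent space of a real hypersurface in the complex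
two-plane Grassmannian `G₂(ℂ^{m+2})` by the Kaehler structure `J` and the quaternionic Kaehler
structure `𝔍`.  Here `η(X) = ⟪ξ, X⟫` and `η_a(X) = ⟪ξ_a, X⟫` are written out via the inner
product. -/
structure ACMS3 (V : Type*) [NormedAddCommGroup V] [InnerProductSpace ℝ V] where
  phi : V →ₗ[ℝ] V
  xi : V
  phiA : Fin 3 → V →ₗ[ℝ] V
  xiA : Fin 3 → V
  xi_unit : ‖xi‖ = 1
  phi_sq : ∀ X : V, phi (phi X) = -X + ⟪xi, X⟫ • xi
  phi_xi : phi xi = 0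
  phi_metric : ∀ X Y : V, ⟪phi X, phi Y⟫ = ⟪X, Y⟫ - ⟪xi, X⟫ * ⟪xi, Y⟫
  xiA_unit : ∀ a, ‖xiA a‖ = 1
  phiA_sq : ∀ a (X : V), phiA a (phiA a X) = -X + ⟪xiA a, X⟫ • xiA a
  phiA_xiA : ∀ a, phiA a (xiA a) = 0
  phiA_metric : ∀ a (X Y : V),
    ⟪phiA a X, phiA a Y⟫ = ⟪X, Y⟫ - ⟪xiA a, X⟫ * ⟪xiA a, Y⟫
  quat1 : ∀ a (X : V), phiA a (phiA (a + 1) X) - ⟪xiA (a + 1), X⟫ • xiA a = phiA (a + 2) X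
  quat2 : ∀ a (X : V),
    phiA (a + 2) X = -(phiA (a + 1) (phiA a X)) + ⟪xiA a, X⟫ • xiA (a + 1)
  quat_xi1 : ∀ a, phiA a (xiA (a + 1)) = xiA (a + 2)
  quat_xi2 : ∀ a, xiA (a + 2) = -(phiA (a + 1) (xiA a))
  rel : ∀ a (X : V), phiA a (phi X) - ⟪xi, X⟫ • xiA a = phi (phiA a X) - ⟪xiA a, X⟫ • xi
  rel_xi : ∀ a, phi (xiA a) = phiA a xi

variable {V : Type*} [NormedAddCommGroup V] [InnerProductSpace ℝ V]

/-- The endomorphism `θ_a X := φ_a φ X − η(X) ξ_a`. -/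
noncomputable def ACMS3.theta (S : ACMS3 V) (a : Fin 3) : V →ₗ[ℝ] V where
  toFun X := S.phiA a (S.phi X) - ⟪S.xi, X⟫ • S.xiA a
  map_add' X Y := by
    simp only [map_add, inner_add_right, add_smul]
    abel
  map_smul' r X := by
    simp only [map_smul, inner_smul_right, RingHom.id_apply, smul_sub, smul_smul]

/-- `H^⊥ = span{ξ, ξ₁, ξ₂, ξ₃, φξ₁, φξ₂, φξ₃}`. -/
noncomputable def ACMS3.Hperp (S : ACMS3 V) : Submodule ℝ V :=
  Submodule.span ℝ {S.xi, S.xiA 0, S.xiA 1, S.xiA 2,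
    S.phi (S.xiA 0), S.phi (S.xiA 1), S.phi (S.xiA 2)}

/-- `H` is the orthogonal complement of `H^⊥` in `V`. -/
noncomputable def ACMS3.H (S : ACMS3 V) : Submodule ℝ V := S.Hperpᗮ

/-- `H_a(ε)`, the eigenspace of `θ_a` restricted to `H` corresponding to the eigenvalue `ε`. -/
noncomputable def ACMS3.eigenH (S : ACMS3 V) (a : Fin 3) (ε : ℝ) : Submodule ℝ V :=
  S.H ⊓ Module.End.eigenspace (S.theta a) ε

/-- The normal Jacobi operator
`R̂_N X = X + 3η(X)ξ + Σ_a (3η_a(X)ξ_a − η(ξ_a)θ_a X + η_a(φX)φξ_a)`. -/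
noncomputable def ACMS3.jacobi (S : ACMS3 V) (X : V) : V :=
  X + (3 * ⟪S.xi, X⟫) • S.xi +
    ∑ a : Fin 3, ((3 * ⟪S.xiA a, X⟫) • S.xiA a
      - ⟪S.xi, S.xiA a⟫ • S.theta a X
      + ⟪S.xiA a, S.phi X⟫ • S.phi (S.xiA a))

namespace ACMS3

variable (S : ACMS3 V)

lemma xi_ne : S.xi ≠ 0 := by
  intro h
  have := S.xi_unit
  rw [h, norm_zero] at this
  norm_num at this

lemma eta_phi (X : V) : ⟪S.xi, S.phi X⟫ = 0 := by
  have h1 := S.phi_sq (S.phi X)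
  have h2 := congrArg S.phi (S.phi_sq X)
  rw [map_add, map_neg, map_smul, S.phi_xi, smul_zero, add_zero] at h2
  rw [h2] at h1
  have h3 : ⟪S.xi, S.phi X⟫ • S.xi = 0 := (left_eq_add.mp h1).symm ▸ rfl
  rcases smul_eq_zero.mp h3 with h | h
  · exact h
  · exact absurd h S.xi_ne

lemma etaA_phiA (a : Fin 3) (X : V) : ⟪S.xiA a, S.phiA a X⟫ = 0 := by
  have h1 := S.phiA_sq a (S.phiA a X)
  have h2 := congrArg (S.phiA a) (S.phiA_sq a X)
  rw [map_add, map_neg, map_smul, S.phiA_xiA, smul_zero, add_zero] at h2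
  rw [h2] at h1
  have h3 : ⟪S.xiA a, S.phiA a X⟫ • S.xiA a = 0 := (left_eq_add.mp h1).symm ▸ rfl
  rcases smul_eq_zero.mp h3 with h | h
  · exact h
  · exfalso
    have := S.xiA_unit a
    rw [h, norm_zero] at this
    norm_num at this

lemma skew (X Y : V) : ⟪S.phi X, Y⟫ = -⟪X, S.phi Y⟫ := by
  have h := S.phi_metric X (S.phi Y)
  rw [S.phi_sq Y, inner_add_right, inner_neg_right, real_inner_smul_right,
    real_inner_comm S.xi (S.phi X), S.eta_phi, S.eta_phi] at h
  linarith

lemma skewA (a : Fin 3) (X Y : V) : ⟪S.phiA a X, Y⟫ = -⟪X, S.phiA a Y⟫ := by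
  have h := S.phiA_metric a X (S.phiA a Y)
  rw [S.phiA_sq a Y, inner_add_right, inner_neg_right, real_inner_smul_right,
    real_inner_comm (S.xiA a) (S.phiA a X), S.etaA_phiA, S.etaA_phiA] at h
  linarith

lemma phiA_xiA_add2 (a : Fin 3) : S.phiA a (S.xiA (a + 2)) = -(S.xiA (a + 1)) := by
  have h := S.quat_xi2 (a + 2)
  have e1 : a + 2 + 2 = a + 1 := by
    rw [add_assoc, show (2 + 2 : Fin 3) = 1 by decide]
  have e2 : a + 2 + 1 = a := by
    rw [add_assoc, show (2 + 1 : Fin 3) = 0 by decide, add_zero]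
  rw [e1, e2] at h
  rw [h, neg_neg]

lemma phiA_xiA_cases (a b : Fin 3) :
    S.phiA a (S.xiA b) = 0 ∨ (∃ c, S.phiA a (S.xiA b) = S.xiA c) ∨
    (∃ c, S.phiA a (S.xiA b) = -(S.xiA c)) := by
  have hd : b - a = 0 ∨ b - a = 1 ∨ b - a = 2 := by
    have : ∀ d : Fin 3, d = 0 ∨ d = 1 ∨ d = 2 := by decide
    exact this _
  have hb : a + (b - a) = b := by rw [add_comm, sub_add_cancel]
  rcases hd with h | h | h <;> rw [h] at hb
  · rw [add_zero] at hb
    subst hb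
    exact Or.inl (S.phiA_xiA _)
  · subst hb
    exact Or.inr (Or.inl ⟨a + 2, S.quat_xi1 a⟩)
  · subst hb
    exact Or.inr (Or.inr ⟨a + 1, S.phiA_xiA_add2 a⟩)

lemma mem_H_iff (X : V) : X ∈ S.H ↔
    ⟪S.xi, X⟫ = 0 ∧ (∀ b, ⟪S.xiA b, X⟫ = 0) ∧ (∀ b, ⟪S.phi (S.xiA b), X⟫ = 0) := by
  constructor
  · intro hX
    rw [H, Submodule.mem_orthogonal] at hX
    have g : ∀ v ∈ ({S.xi, S.xiA 0, S.xiA 1, S.xiA 2,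
        S.phi (S.xiA 0), S.phi (S.xiA 1), S.phi (S.xiA 2)} : Set V), ⟪v, X⟫ = 0 := by
      intro v hv
      exact hX v (Submodule.subset_span hv)
    refine ⟨g _ (by simp), fun b => ?_, fun b => ?_⟩ <;> fin_cases b
    · exact g _ (by simp)
    · exact g _ (by simp)
    · exact g _ (by simp)
    · exact g _ (by simp)
    · exact g _ (by simp)
    · exact g _ (by simp)
  · rintro ⟨h1, h2, h3⟩
    rw [H, Submodule.mem_orthogonal]
    intro u hu
    induction hu using Submodule.span_induction with
    | mem v hv =>
      simp only [Set.mem_insert_iff, Set.mem_singleton_iff] at hv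
      rcases hv with rfl | rfl | rfl | rfl | rfl | rfl | rfl
      · exact h1
      · exact h2 0
      · exact h2 1
      · exact h2 2
      · exact h3 0
      · exact h3 1
      · exact h3 2
    | zero => simp
    | add u v _ _ hu hv => rw [inner_add_left, hu, hv, add_zero]
    | smul r u _ hu => rw [real_inner_smul_left, hu, mul_zero]

lemma H_xi {X : V} (hX : X ∈ S.H) : ⟪S.xi, X⟫ = 0 := ((S.mem_H_iff X).1 hX).1

lemma H_xiA {X : V} (hX : X ∈ S.H) (b : Fin 3) : ⟪S.xiA b, X⟫ = 0 :=
  ((S.mem_H_iff X).1 hX).2.1 b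

lemma H_phixiA {X : V} (hX : X ∈ S.H) (b : Fin 3) : ⟪S.phi (S.xiA b), X⟫ = 0 :=
  ((S.mem_H_iff X).1 hX).2.2 b

lemma H_xiA_phi {X : V} (hX : X ∈ S.H) (b : Fin 3) : ⟪S.xiA b, S.phi X⟫ = 0 := by
  have h := S.skew (S.xiA b) X
  have h2 := S.H_phixiA hX b
  linarith

lemma H_phiAxiA {X : V} (hX : X ∈ S.H) (a b : Fin 3) : ⟪S.phiA a (S.xiA b), X⟫ = 0 := by
  rcases S.phiA_xiA_cases a b with h | ⟨c, h⟩ | ⟨c, h⟩ <;> rw [h]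
  · simp
  · exact S.H_xiA hX c
  · rw [inner_neg_left, S.H_xiA hX c, neg_zero]

lemma theta_apply (a : Fin 3) (X : V) :
    S.theta a X = S.phiA a (S.phi X) - ⟪S.xi, X⟫ • S.xiA a := rfl

lemma theta_H (a : Fin 3) {X : V} (hX : X ∈ S.H) : S.theta a X = S.phiA a (S.phi X) := by
  rw [theta_apply, S.H_xi hX, zero_smul, sub_zero]

lemma theta_mem_H (a : Fin 3) {X : V} (hX : X ∈ S.H) : S.theta a X ∈ S.H := by
  rw [S.theta_H a hX, mem_H_iff]
  refine ⟨?_, fun b => ?_, fun b => ?_⟩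
  · have hs := S.skewA a S.xi (S.phi X)
    rw [← S.rel_xi a] at hs
    have hm := S.phi_metric (S.xiA a) X
    rw [S.H_xiA hX a, S.H_xi hX, mul_zero, sub_zero] at hm
    linarith
  · have hs := S.skewA a (S.xiA b) (S.phi X)
    have hz : ⟪S.phiA a (S.xiA b), S.phi X⟫ = 0 := by
      rcases S.phiA_xiA_cases a b with h | ⟨c, h⟩ | ⟨c, h⟩ <;> rw [h]
      · simp
      · exact S.H_xiA_phi hX c
      · rw [inner_neg_left, S.H_xiA_phi hX c, neg_zero]
    linarith
  · have hs := S.skewA a (S.phi (S.xiA b)) (S.phi X)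
    have hrel := S.rel a (S.xiA b)
    have hz : ⟪S.phiA a (S.phi (S.xiA b)), S.phi X⟫ = 0 := by
      have h4 : S.phiA a (S.phi (S.xiA b)) =
          S.phi (S.phiA a (S.xiA b)) - ⟪S.xiA a, S.xiA b⟫ • S.xi
            + ⟪S.xi, S.xiA b⟫ • S.xiA a := by
        rw [← hrel]
        abel
      rw [h4, inner_add_left, inner_sub_left, real_inner_smul_left, real_inner_smul_left,
        S.eta_phi X, S.H_xiA_phi hX a, mul_zero, mul_zero, sub_zero, add_zero]
      have hm := S.phi_metric (S.phiA a (S.xiA b)) X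
      rw [S.H_phiAxiA hX a b, S.H_xi hX, mul_zero, sub_zero] at hm
      exact hm
    linarith

lemma theta_theta_H (a : Fin 3) {X : V} (hX : X ∈ S.H) : S.theta a (S.theta a X) = X := by
  rw [S.theta_H a (S.theta_mem_H a hX), S.theta_H a hX]
  have hrel := S.rel a (S.phi X)
  rw [S.eta_phi X, S.H_xiA_phi hX a, zero_smul, zero_smul, sub_zero, sub_zero] at hrel
  rw [← hrel, S.phi_sq X, S.H_xi hX, zero_smul, add_zero, map_neg, map_neg,
    S.phiA_sq a X, S.H_xiA hX a]
  simp

lemma theta_symm (a : Fin 3) {X Y : V} (hX : X ∈ S.H) (hY : Y ∈ S.H) :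
    ⟪S.theta a X, Y⟫ = ⟪X, S.theta a Y⟫ := by
  rw [S.theta_H a hX, S.theta_H a hY]
  have h1 := S.skewA a (S.phi X) Y
  have h2 := S.skew X (S.phiA a Y)
  have hrel := S.rel a Y
  rw [S.H_xi hY, S.H_xiA hY a, zero_smul, zero_smul, sub_zero, sub_zero] at hrel
  rw [h1, h2, neg_neg, hrel]

end ACMS3

/-- For each `a ∈ {1,2,3}`, the subspace `H` is invariant under `θ_a` and
`θ_a² X = X` for all `X ∈ H`; consequently the restriction `θ_a|_H` is a symmetric involution
whose only possible eigenvalues are `1` and `−1`, and `H` is the orthogonal direct sum of the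
eigenspaces `H_a(1)` and `H_a(−1)`. -/
theorem theta_restrict_H [FiniteDimensional ℝ V] (S : ACMS3 V) (a : Fin 3) :
    (∀ X ∈ S.H, S.theta a X ∈ S.H) ∧
    (∀ X ∈ S.H, S.theta a (S.theta a X) = X) ∧
    (∀ X ∈ S.H, ∀ Y ∈ S.H, ⟪S.theta a X, Y⟫ = ⟪X, S.theta a Y⟫) ∧
    (∀ (ε : ℝ) (X : V), X ∈ S.H → X ≠ 0 → S.theta a X = ε • X → ε = 1 ∨ ε = -1) ∧
    (∀ x ∈ S.eigenH a 1, ∀ y ∈ S.eigenH a (-1), ⟪x, y⟫ = 0) ∧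
    S.eigenH a 1 ⊔ S.eigenH a (-1) = S.H := by
  refine ⟨fun X hX => S.theta_mem_H a hX, fun X hX => S.theta_theta_H a hX,
    fun X hX Y hY => S.theta_symm a hX hY, ?_, ?_, ?_⟩
  · intro ε X hX hne he
    have h := S.theta_theta_H a hX
    rw [he, map_smul, he, smul_smul] at h
    have h2 : (ε * ε - 1) • X = 0 := by
      rw [sub_smul, one_smul, h, sub_self]
    rcases smul_eq_zero.mp h2 with h' | h'
    · have h3 : ε * ε = 1 := by linarith
      exact mul_self_eq_one_iff.mp h3
    · exact absurd h' hne
  · rintro x ⟨hxH, hx⟩ y ⟨hyH, hy⟩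
    have hx' : S.theta a x = (1 : ℝ) • x := Module.End.mem_eigenspace_iff.mp hx
    have hy' : S.theta a y = (-1 : ℝ) • y := Module.End.mem_eigenspace_iff.mp hy
    have h := S.theta_symm a hxH hyH
    rw [hx', hy', real_inner_smul_left, real_inner_smul_right, one_mul, neg_one_mul] at h
    linarith
  · apply le_antisymm
    · exact sup_le inf_le_left inf_le_left
    · intro X hX
      rw [Submodule.mem_sup]
      refine ⟨(1 / 2 : ℝ) • (X + S.theta a X), ⟨?_, ?_⟩,
        (1 / 2 : ℝ) • (X - S.theta a X), ⟨?_, ?_⟩, ?_⟩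
      · exact Submodule.smul_mem _ _ (Submodule.add_mem _ hX (S.theta_mem_H a hX))
      · refine Module.End.mem_eigenspace_iff.mpr ?_
        rw [map_smul, map_add, S.theta_theta_H a hX, one_smul, add_comm X (S.theta a X)]
      · exact Submodule.smul_mem _ _ (Submodule.sub_mem _ hX (S.theta_mem_H a hX))
      · refine Module.End.mem_eigenspace_iff.mpr ?_
        rw [map_smul, map_sub, S.theta_theta_H a hX, neg_one_smul, ← smul_neg, neg_sub]
      · rw [← smul_add]
        have : X + S.theta a X + (X - S.theta a X) = (2 : ℝ) • X := by
          rw [two_smul]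
          abel
        rw [this, smul_smul]
        norm_num
end

section
/- For a, b ∈ {1, 2, 3} with a ≠ b and ε ∈ {1, −1}, φ_b(H_a(ε)) = H_a(−ε). -/
open RealInnerProductSpace

variable {V : Type*} [NormedAddCommGroup V] [InnerProductSpace ℝ V]

section Aux

/-- For an almost contact metric structure, `⟪ξ, φX⟫ = 0`. -/
lemma acm_inner_xi_apply (f : V →ₗ[ℝ] V) (x : V) (hx : ‖x‖ = 1)
    (hsq : ∀ X : V, f (f X) = -X + ⟪x, X⟫ • x)
    (hm : ∀ X Y : V, ⟪f X, f Y⟫ = ⟪X, Y⟫ - ⟪x, X⟫ * ⟪x, Y⟫) (X : V) :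
    ⟪x, f X⟫ = 0 := by
  have hxx : ⟪x, x⟫ = 1 := by rw [real_inner_self_eq_norm_sq, hx]; norm_num
  have h := hm (f X) (f X)
  rw [hsq X] at h
  have h' := hm X X
  simp only [inner_add_left, inner_add_right, inner_neg_left, inner_neg_right,
    inner_smul_left, inner_smul_right, conj_trivial, real_inner_comm x X, hxx] at h
  nlinarith [h, h']

/-- Skew-symmetry of `φ`. -/
lemma acm_skew (f : V →ₗ[ℝ] V) (x : V) (hx : ‖x‖ = 1)
    (hsq : ∀ X : V, f (f X) = -X + ⟪x, X⟫ • x)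
    (hm : ∀ X Y : V, ⟪f X, f Y⟫ = ⟪X, Y⟫ - ⟪x, X⟫ * ⟪x, Y⟫) (X Y : V) :
    ⟪f X, Y⟫ = -⟪X, f Y⟫ := by
  have h0 := acm_inner_xi_apply f x hx hsq hm
  have hY : Y = ⟪x, Y⟫ • x - f (f Y) := by rw [hsq Y]; abel
  calc ⟪f X, Y⟫ = ⟪f X, ⟪x, Y⟫ • x - f (f Y)⟫ := by rw [← hY]
    _ = ⟪x, Y⟫ * ⟪f X, x⟫ - ⟪f X, f (f Y)⟫ := by
        rw [inner_sub_right, inner_smul_right]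
    _ = ⟪x, Y⟫ * ⟪x, f X⟫ - (⟪X, f Y⟫ - ⟪x, X⟫ * ⟪x, f Y⟫) := by
        rw [real_inner_comm (f X) x, hm X (f Y)]
    _ = -⟪X, f Y⟫ := by rw [h0 X, h0 Y]; ring

/-- Skew-symmetry, other form. -/
lemma acm_skew' (f : V →ₗ[ℝ] V) (x : V) (hx : ‖x‖ = 1)
    (hsq : ∀ X : V, f (f X) = -X + ⟪x, X⟫ • x)
    (hm : ∀ X Y : V, ⟪f X, f Y⟫ = ⟪X, Y⟫ - ⟪x, X⟫ * ⟪x, Y⟫) (X Y : V) :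
    ⟪X, f Y⟫ = -⟪f X, Y⟫ := by
  rw [acm_skew f x hx hsq hm X Y]; ring

/-- Characterization of membership in `H`. -/
lemma ACMS3.mem_H_iff_s10 (S : ACMS3 V) (x : V) :
    x ∈ S.H ↔ ⟪S.xi, x⟫ = 0 ∧ (∀ c, ⟪S.xiA c, x⟫ = 0) ∧
      (∀ c, ⟪S.phi (S.xiA c), x⟫ = 0) := by
  constructor
  · intro h
    rw [ACMS3.H, Submodule.mem_orthogonal] at h
    refine ⟨?_, ?_, ?_⟩
    · exact h _ (Submodule.subset_span (by simp [ACMS3.Hperp]))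
    · intro c
      fin_cases c <;> exact h _ (Submodule.subset_span (by simp [ACMS3.Hperp]))
    · intro c
      fin_cases c <;> exact h _ (Submodule.subset_span (by simp [ACMS3.Hperp]))
  · rintro ⟨h1, h2, h3⟩
    rw [ACMS3.H, Submodule.mem_orthogonal]
    intro u hu
    induction hu using Submodule.span_induction with
    | mem u hu =>
        simp only [Set.mem_insert_iff, Set.mem_singleton_iff] at hu
        rcases hu with rfl | rfl | rfl | rfl | rfl | rfl | rfl
        · exact h1
        · exact h2 0
        · exact h2 1
        · exact h2 2
        · exact h3 0
        · exact h3 1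
        · exact h3 2
    | zero => simp
    | add u v _ _ hu hv => rw [inner_add_left, hu, hv]; ring
    | smul r u _ hu => rw [real_inner_smul_left, hu]; ring

/-- The values `φ_b ξ_c` all lie in `{0, ±ξ_d}`. -/
lemma ACMS3.phiA_xiA_cases_s10 (S : ACMS3 V) (b c : Fin 3) :
    S.phiA b (S.xiA c) = 0 ∨ (∃ d, S.phiA b (S.xiA c) = S.xiA d) ∨
      ∃ d, S.phiA b (S.xiA c) = -(S.xiA d) := by
  have htri : ∀ b c : Fin 3, c = b ∨ c = b + 1 ∨ c = b + 2 := by decide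
  have h31 : ∀ x : Fin 3, x + 2 + 1 = x := by decide
  have h32 : ∀ x : Fin 3, x + 2 + 2 = x + 1 := by decide
  rcases htri b c with h | h | h <;> rw [h]
  · exact Or.inl (S.phiA_xiA b)
  · exact Or.inr (Or.inl ⟨b + 2, S.quat_xi1 b⟩)
  · refine Or.inr (Or.inr ⟨b + 1, ?_⟩)
    have h := S.quat_xi2 (b + 2)
    rw [h31 b, h32 b] at h
    rw [h, neg_neg]

/-- `⟪φ_b ξ_c, x⟫ = 0` for `x ∈ H`. -/
lemma ACMS3.inner_phiA_xiA_H (S : ACMS3 V) (b c : Fin 3) {x : V} (hx : x ∈ S.H) :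
    ⟪S.phiA b (S.xiA c), x⟫ = 0 := by
  obtain ⟨_, h2, _⟩ := (S.mem_H_iff_s10 x).1 hx
  rcases S.phiA_xiA_cases_s10 b c with h | ⟨d, h⟩ | ⟨d, h⟩ <;> rw [h]
  · simp
  · exact h2 d
  · rw [inner_neg_left, h2 d, neg_zero]

/-- `⟪φ (φ_b ξ_c), x⟫ = 0` for `x ∈ H`. -/
lemma ACMS3.inner_phi_phiA_xiA_H (S : ACMS3 V) (b c : Fin 3) {x : V} (hx : x ∈ S.H) :
    ⟪S.phi (S.phiA b (S.xiA c)), x⟫ = 0 := by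
  obtain ⟨_, _, h3⟩ := (S.mem_H_iff_s10 x).1 hx
  rcases S.phiA_xiA_cases_s10 b c with h | ⟨d, h⟩ | ⟨d, h⟩ <;> rw [h]
  · simp
  · exact h3 d
  · rw [map_neg, inner_neg_left, h3 d, neg_zero]

/-- `H` is invariant under each `φ_b`. -/
lemma ACMS3.H_phiA_mem (S : ACMS3 V) (b : Fin 3) {x : V} (hx : x ∈ S.H) :
    S.phiA b x ∈ S.H := by
  obtain ⟨h1, h2, h3⟩ := (S.mem_H_iff_s10 x).1 hx
  have skb := acm_skew' (S.phiA b) (S.xiA b) (S.xiA_unit b) (S.phiA_sq b) (S.phiA_metric b)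
  rw [S.mem_H_iff_s10]
  refine ⟨?_, ?_, ?_⟩
  · rw [skb, ← S.rel_xi b, h3 b, neg_zero]
  · intro c
    rw [skb, S.inner_phiA_xiA_H b c hx, neg_zero]
  · intro c
    rw [skb]
    have hrel := S.rel b (S.xiA c)
    have : S.phiA b (S.phi (S.xiA c)) =
        S.phi (S.phiA b (S.xiA c)) - ⟪S.xiA b, S.xiA c⟫ • S.xi + ⟪S.xi, S.xiA c⟫ • S.xiA b := by
      rw [← hrel]; abel
    rw [this]
    rw [inner_add_left, inner_sub_left, inner_smul_left, inner_smul_left,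
      S.inner_phi_phiA_xiA_H b c hx, h1, h2 b]
    simp

/-- Quaternionic anticommutation. -/
lemma ACMS3.anticomm (S : ACMS3 V) (a : Fin 3) (Y : V) :
    S.phiA a (S.phiA (a + 1) Y) + S.phiA (a + 1) (S.phiA a Y)
      = ⟪S.xiA (a + 1), Y⟫ • S.xiA a + ⟪S.xiA a, Y⟫ • S.xiA (a + 1) := by
  have h1 := S.quat1 a Y
  have h2 := S.quat2 a Y
  have e1 : S.phiA a (S.phiA (a + 1) Y)
      = S.phiA (a + 2) Y + ⟪S.xiA (a + 1), Y⟫ • S.xiA a := by rw [← h1]; abel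
  have e2 : S.phiA (a + 1) (S.phiA a Y)
      = ⟪S.xiA a, Y⟫ • S.xiA (a + 1) - S.phiA (a + 2) Y := by rw [h2]; abel
  rw [e1, e2]; abel

lemma ACMS3.anticomm' (S : ACMS3 V) {a b : Fin 3} (hab : a ≠ b) (Y : V) :
    S.phiA a (S.phiA b Y) + S.phiA b (S.phiA a Y)
      = ⟪S.xiA b, Y⟫ • S.xiA a + ⟪S.xiA a, Y⟫ • S.xiA b := by
  have hcase : ∀ a b : Fin 3, a ≠ b → b = a + 1 ∨ a = b + 1 := by decide
  rcases hcase a b hab with rfl | rfl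
  · exact S.anticomm a Y
  · have h := S.anticomm b Y
    rw [add_comm] at h
    rw [h]; abel

/-- Anticommutation of `θ_a` and `φ_b` on `H`. -/
lemma ACMS3.theta_phiA_anticomm (S : ACMS3 V) {a b : Fin 3} (hab : a ≠ b) {x : V}
    (hx : x ∈ S.H) : S.theta a (S.phiA b x) = -(S.phiA b (S.theta a x)) := by
  obtain ⟨h1, h2, h3⟩ := (S.mem_H_iff_s10 x).1 hx
  have skphi := acm_skew' S.phi S.xi S.xi_unit S.phi_sq S.phi_metric
  have skb := acm_skew' (S.phiA b) (S.xiA b) (S.xiA_unit b) (S.phiA_sq b) (S.phiA_metric b)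
  have hxibx : ⟪S.xi, S.phiA b x⟫ = 0 := by
    rw [skb, ← S.rel_xi b, h3 b, neg_zero]
  have hcomm : S.phi (S.phiA b x) = S.phiA b (S.phi x) := by
    have hrel := S.rel b x
    rw [h1, h2 b] at hrel
    simp only [zero_smul, sub_zero] at hrel
    exact hrel.symm
  have hxa : ⟪S.xiA a, S.phi x⟫ = 0 := by rw [skphi, h3 a, neg_zero]
  have hxb : ⟪S.xiA b, S.phi x⟫ = 0 := by rw [skphi, h3 b, neg_zero]
  have hanti := S.anticomm' hab (S.phi x)
  rw [hxa, hxb] at hanti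
  simp only [zero_smul, add_zero] at hanti
  show S.phiA a (S.phi (S.phiA b x)) - ⟪S.xi, S.phiA b x⟫ • S.xiA a
      = -(S.phiA b (S.phiA a (S.phi x) - ⟪S.xi, x⟫ • S.xiA a))
  rw [hxibx, h1, hcomm]
  simp only [zero_smul, sub_zero, map_sub, map_zero]
  exact eq_neg_of_add_eq_zero_left hanti

end Aux

/-- For `a, b ∈ {1,2,3}` with `a ≠ b` and `ε ∈ {1,−1}`,
`φ_b(H_a(ε)) = H_a(−ε)`. -/
theorem eigenH_phiA_map [FiniteDimensional ℝ V] (S : ACMS3 V) (a b : Fin 3) (hab : a ≠ b)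
    (ε : ℝ) (hε : ε = 1 ∨ ε = -1) :
    (S.eigenH a ε).map (S.phiA b) = S.eigenH a (-ε) := by
  apply le_antisymm
  · rintro y hy
    rw [Submodule.mem_map] at hy
    obtain ⟨x, hx, rfl⟩ := hy
    rw [ACMS3.eigenH, Submodule.mem_inf, Module.End.mem_eigenspace_iff] at hx ⊢
    obtain ⟨hxH, hxe⟩ := hx
    refine ⟨S.H_phiA_mem b hxH, ?_⟩
    rw [S.theta_phiA_anticomm hab hxH, hxe, map_smul]
    rw [neg_smul]
  · intro y hy
    rw [ACMS3.eigenH, Submodule.mem_inf, Module.End.mem_eigenspace_iff] at hy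
    obtain ⟨hyH, hye⟩ := hy
    have hby : ⟪S.xiA b, y⟫ = 0 := ((S.mem_H_iff_s10 y).1 hyH).2.1 b
    have hxH : -(S.phiA b y) ∈ S.H := (S.H).neg_mem (S.H_phiA_mem b hyH)
    refine Submodule.mem_map.2 ⟨-(S.phiA b y), ?_, ?_⟩
    · rw [ACMS3.eigenH, Submodule.mem_inf, Module.End.mem_eigenspace_iff]
      refine ⟨hxH, ?_⟩
      rw [map_neg, S.theta_phiA_anticomm hab hyH, neg_neg, hye, map_smul, neg_smul, smul_neg]
    · rw [map_neg, S.phiA_sq b y, hby]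
      simp
end

section
/- Assume η(ξ_a) = 0 for all a ∈ {1, 2, 3}. Then the normal Jacobi operator R̂_N has exactly the eigenvalues 0, 4 and 1, with corresponding eigenspaces T₀ = span{φξ₁, φξ₂, φξ₃}, T₄ = span{ξ, ξ₁, ξ₂, ξ₃} and T₁ = H, and V is the orthogonal direct sum T₀ ⊕ T₄ ⊕ T₁ (assuming H ≠ 0). -/
open RealInnerProductSpace

variable {V : Type*} [NormedAddCommGroup V] [InnerProductSpace ℝ V]

section Aux
variable {V : Type*} [NormedAddCommGroup V] [InnerProductSpace ℝ V]

lemma aux_eta (φ : V →ₗ[ℝ] V) (ξ : V) (hξ : ‖ξ‖ = 1)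
    (hsq : ∀ X : V, φ (φ X) = -X + ⟪ξ, X⟫ • ξ)
    (hm : ∀ X Y : V, ⟪φ X, φ Y⟫ = ⟪X, Y⟫ - ⟪ξ, X⟫ * ⟪ξ, Y⟫) (Y : V) :
    ⟪ξ, φ Y⟫ = 0 := by
  have hξξ : ⟪ξ, ξ⟫ = 1 := by rw [real_inner_self_eq_norm_mul_norm, hξ]; ring
  have h1 := hm (φ Y) (φ Y)
  rw [hsq Y] at h1
  have h2 := hm Y Y
  simp only [inner_add_left, inner_add_right, inner_neg_left, inner_neg_right,
    inner_smul_left, inner_smul_right, hξξ, h2, real_inner_comm Y ξ] at h1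
  nlinarith [h1, sq_nonneg (⟪ξ, φ Y⟫ : ℝ)]

lemma aux_skew (φ : V →ₗ[ℝ] V) (ξ : V) (hξ : ‖ξ‖ = 1)
    (hsq : ∀ X : V, φ (φ X) = -X + ⟪ξ, X⟫ • ξ)
    (hm : ∀ X Y : V, ⟪φ X, φ Y⟫ = ⟪X, Y⟫ - ⟪ξ, X⟫ * ⟪ξ, Y⟫) (X Y : V) :
    ⟪φ X, Y⟫ = -⟪X, φ Y⟫ := by
  have he := aux_eta φ ξ hξ hsq hm
  have h3 : (⟪φ X, ξ⟫ : ℝ) = 0 := by rw [real_inner_comm]; exact he X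
  have h1 := hm X (φ Y)
  rw [hsq Y, he Y, mul_zero, sub_zero] at h1
  simp only [inner_add_right, inner_neg_right, inner_smul_right, h3,
    mul_zero, add_zero] at h1
  linarith

end Aux
section Tab
variable {V : Type*} [NormedAddCommGroup V] [InnerProductSpace ℝ V] (S : ACMS3 V)

lemma S_phi_eta (Y : V) : ⟪S.xi, S.phi Y⟫ = 0 :=
  aux_eta S.phi S.xi S.xi_unit S.phi_sq S.phi_metric Y

lemma S_phi_skew (X Y : V) : ⟪S.phi X, Y⟫ = -⟪X, S.phi Y⟫ :=
  aux_skew S.phi S.xi S.xi_unit S.phi_sq S.phi_metric X Y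

lemma S_phiA_skew (a : Fin 3) (X Y : V) : ⟪S.phiA a X, Y⟫ = -⟪X, S.phiA a Y⟫ :=
  aux_skew (S.phiA a) (S.xiA a) (S.xiA_unit a) (S.phiA_sq a) (S.phiA_metric a) X Y

lemma ip_xx : ⟪S.xi, S.xi⟫ = 1 := by
  rw [real_inner_self_eq_norm_mul_norm, S.xi_unit]; ring

lemma ip_aa (a : Fin 3) : ⟪S.xiA a, S.xiA a⟫ = 1 := by
  rw [real_inner_self_eq_norm_mul_norm, S.xiA_unit]; ring

lemma ip_key (a : Fin 3) : ⟪S.xiA (a + 1), S.xiA (a + 2)⟫ = 0 := by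
  have h1 := S.quat_xi1 a
  have h2 := S_phiA_skew S a (S.xiA (a + 1)) (S.xiA (a + 1))
  rw [h1] at h2
  rw [real_inner_comm] at h2
  linarith [h2, real_inner_comm (S.xiA (a+1)) (S.xiA (a+2))]

lemma ip12 : ⟪S.xiA 1, S.xiA 2⟫ = 0 := by have := ip_key S 0; norm_num at this; exact this
lemma ip20 : ⟪S.xiA 2, S.xiA 0⟫ = 0 := by have := ip_key S 1; norm_num at this; exact this
lemma ip01 : ⟪S.xiA 0, S.xiA 1⟫ = 0 := by have := ip_key S 2; norm_num at this; exact this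
lemma ip21 : ⟪S.xiA 2, S.xiA 1⟫ = 0 := by rw [real_inner_comm]; exact ip12 S
lemma ip02 : ⟪S.xiA 0, S.xiA 2⟫ = 0 := by rw [real_inner_comm]; exact ip20 S
lemma ip10 : ⟪S.xiA 1, S.xiA 0⟫ = 0 := by rw [real_inner_comm]; exact ip01 S

end Tab
section Tab2
variable {V : Type*} [NormedAddCommGroup V] [InnerProductSpace ℝ V] (S : ACMS3 V)
variable (h : ∀ a, ⟪S.xi, S.xiA a⟫ = 0)
include h

lemma ip_ax (a : Fin 3) : ⟪S.xiA a, S.xi⟫ = 0 := by rw [real_inner_comm]; exact h a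

lemma ip_phiAb_xi (b a : Fin 3) : ⟪S.phiA b (S.xiA a), S.xi⟫ = 0 := by
  have hc : a = b ∨ a = b + 1 ∨ a = b + 2 := by
    revert a b; decide
  rcases hc with rfl | rfl | rfl
  · rw [S.phiA_xiA]; simp
  · rw [S.quat_xi1]; exact ip_ax S h _
  · have hq := S.quat_xi2 (b + 2)
    have e1 : ∀ c : Fin 3, c + 2 + 2 = c + 1 := by decide
    have e2 : ∀ c : Fin 3, c + 2 + 1 = c := by decide
    rw [e1, e2] at hq
    have : S.phiA b (S.xiA (b + 2)) = -S.xiA (b + 1) := by rw [hq]; simp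
    rw [this, inner_neg_left, ip_ax S h, neg_zero]

/-- `⟪ξ_a, φξ_b⟫ = 0` for all `a b`. -/
lemma ip_a_phib (a b : Fin 3) : ⟪S.xiA a, S.phi (S.xiA b)⟫ = 0 := by
  rw [S.rel_xi b]
  have hsk := S_phiA_skew S b (S.xiA a) S.xi
  have h2 := ip_phiAb_xi S h b a
  linarith

lemma ip_phib_a (a b : Fin 3) : ⟪S.phi (S.xiA b), S.xiA a⟫ = 0 := by
  rw [real_inner_comm]; exact ip_a_phib S h a b

omit h in
lemma ip_x_phib (b : Fin 3) : ⟪S.xi, S.phi (S.xiA b)⟫ = 0 := S_phi_eta S _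

omit h in
lemma ip_phib_x (b : Fin 3) : ⟪S.phi (S.xiA b), S.xi⟫ = 0 := by
  rw [real_inner_comm]; exact ip_x_phib S b

lemma ip_phia_phib (a b : Fin 3) :
    ⟪S.phi (S.xiA a), S.phi (S.xiA b)⟫ = ⟪S.xiA a, S.xiA b⟫ := by
  rw [S.phi_metric, h a, h b]; ring

end Tab2
section Jac
variable {V : Type*} [NormedAddCommGroup V] [InnerProductSpace ℝ V] (S : ACMS3 V)

lemma jacobi_add (X Y : V) : S.jacobi (X + Y) = S.jacobi X + S.jacobi Y := by
  simp only [ACMS3.jacobi, Fin.sum_univ_three, map_add, inner_add_right, mul_add]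
  module

lemma jacobi_smul (r : ℝ) (X : V) : S.jacobi (r • X) = r • S.jacobi X := by
  simp only [ACMS3.jacobi, Fin.sum_univ_three, map_smul, inner_smul_right]
  module

lemma jacobi_zero : S.jacobi 0 = 0 := by
  have := jacobi_smul S 0 0; simpa using this

variable (h : ∀ a, ⟪S.xi, S.xiA a⟫ = 0)
include h

lemma jacobi_eq (X : V) : S.jacobi X = X + (3 * ⟪S.xi, X⟫) • S.xi +
    ∑ a : Fin 3, ((3 * ⟪S.xiA a, X⟫) • S.xiA a - ⟪S.phi (S.xiA a), X⟫ • S.phi (S.xiA a)) := by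
  unfold ACMS3.jacobi
  congr 1
  refine Finset.sum_congr rfl fun a _ => ?_
  rw [h a, zero_smul, sub_zero]
  have hs : ⟪S.xiA a, S.phi X⟫ = -⟪S.phi (S.xiA a), X⟫ := by
    have := S_phi_skew S (S.xiA a) X; linarith
  rw [hs]
  module

lemma jacobi_xi : S.jacobi S.xi = (4 : ℝ) • S.xi := by
  rw [jacobi_eq S h]
  simp only [Fin.sum_univ_three, ip_xx, ip_ax S h, ip_phib_x, mul_zero, mul_one,
    zero_smul, sub_zero, zero_sub]
  module

lemma jacobi_xiA (b : Fin 3) : S.jacobi (S.xiA b) = (4 : ℝ) • S.xiA b := by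
  have hphi : ∀ a, ⟪S.phi (S.xiA a), S.xiA b⟫ = 0 := fun a => ip_phib_a S h b a
  have h0 : S.jacobi (S.xiA 0) = (4 : ℝ) • S.xiA 0 := by
    rw [jacobi_eq S h]
    simp only [Fin.sum_univ_three, h, ip_phib_a S h, ip_aa, ip01, ip02, ip10, ip12, ip20, ip21,
      mul_zero, mul_one, zero_smul, sub_zero, zero_sub, zero_add, add_zero, neg_zero]
    module
  have h1 : S.jacobi (S.xiA 1) = (4 : ℝ) • S.xiA 1 := by
    rw [jacobi_eq S h]
    simp only [Fin.sum_univ_three, h, ip_phib_a S h, ip_aa, ip01, ip02, ip10, ip12, ip20, ip21,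
      mul_zero, mul_one, zero_smul, sub_zero, zero_sub, zero_add, add_zero, neg_zero]
    module
  have h2 : S.jacobi (S.xiA 2) = (4 : ℝ) • S.xiA 2 := by
    rw [jacobi_eq S h]
    simp only [Fin.sum_univ_three, h, ip_phib_a S h, ip_aa, ip01, ip02, ip10, ip12, ip20, ip21,
      mul_zero, mul_one, zero_smul, sub_zero, zero_sub, zero_add, add_zero, neg_zero]
    module
  fin_cases b
  · exact h0
  · exact h1
  · exact h2

lemma jacobi_phixiA (b : Fin 3) : S.jacobi (S.phi (S.xiA b)) = 0 := by
  have k0 : S.jacobi (S.phi (S.xiA 0)) = 0 := by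
    rw [jacobi_eq S h]
    simp only [Fin.sum_univ_three, ip_a_phib S h, ip_phia_phib S h, ip_x_phib, ip_aa,
      ip01, ip02, ip10, ip12, ip20, ip21, mul_zero, mul_one, zero_smul, sub_zero,
      zero_sub, zero_add, add_zero, neg_zero, one_smul]
    module
  have k1 : S.jacobi (S.phi (S.xiA 1)) = 0 := by
    rw [jacobi_eq S h]
    simp only [Fin.sum_univ_three, ip_a_phib S h, ip_phia_phib S h, ip_x_phib, ip_aa,
      ip01, ip02, ip10, ip12, ip20, ip21, mul_zero, mul_one, zero_smul, sub_zero,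
      zero_sub, zero_add, add_zero, neg_zero, one_smul]
    module
  have k2 : S.jacobi (S.phi (S.xiA 2)) = 0 := by
    rw [jacobi_eq S h]
    simp only [Fin.sum_univ_three, ip_a_phib S h, ip_phia_phib S h, ip_x_phib, ip_aa,
      ip01, ip02, ip10, ip12, ip20, ip21, mul_zero, mul_one, zero_smul, sub_zero,
      zero_sub, zero_add, add_zero, neg_zero, one_smul]
    module
  fin_cases b
  · exact k0
  · exact k1
  · exact k2

end Jac
section Main
variable {V : Type*} [NormedAddCommGroup V] [InnerProductSpace ℝ V]

lemma inner_span_span_zero {s t : Set V} (hst : ∀ x ∈ s, ∀ y ∈ t, ⟪x, y⟫ = (0:ℝ)) :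
    ∀ x ∈ Submodule.span ℝ s, ∀ y ∈ Submodule.span ℝ t, ⟪x, y⟫ = 0 := by
  intro x hx
  induction hx using Submodule.span_induction with
  | mem x hxs =>
    intro y hy
    induction hy using Submodule.span_induction with
    | mem y hyt => exact hst _ hxs _ hyt
    | zero => simp
    | add y z _ _ iy iz => rw [inner_add_right, iy, iz]; ring
    | smul r y _ iy => rw [real_inner_smul_right, iy]; ring
  | zero => intro y hy; simp
  | add x z _ _ ix iz => intro y hy; rw [inner_add_left, ix _ hy, iz _ hy]; ring
  | smul r x _ ix => intro y hy; rw [real_inner_smul_left, ix _ hy]; ring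

variable (S : ACMS3 V) (h : ∀ a, ⟪S.xi, S.xiA a⟫ = 0)
include h

omit h in
lemma mem_H_of_inner {X : V} (hx : ⟪S.xi, X⟫ = 0) (ha : ∀ a, ⟪S.xiA a, X⟫ = 0)
    (hp : ∀ a, ⟪S.phi (S.xiA a), X⟫ = 0) : X ∈ S.H := by
  rw [ACMS3.H, Submodule.mem_orthogonal]
  intro u hu
  induction hu using Submodule.span_induction with
  | mem u hus =>
    simp only [Set.mem_insert_iff, Set.mem_singleton_iff] at hus
    rcases hus with rfl | rfl | rfl | rfl | rfl | rfl | rfl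
    exacts [hx, ha 0, ha 1, ha 2, hp 0, hp 1, hp 2]
  | zero => simp
  | add u v _ _ iu iv => rw [inner_add_left, iu, iv]; ring
  | smul r u _ iu => rw [real_inner_smul_left, iu]; ring

lemma jacobi_H {X : V} (hX : X ∈ S.H) : S.jacobi X = X := by
  have g : ∀ u ∈ S.Hperp, ⟪u, X⟫ = 0 := (Submodule.mem_orthogonal _ _).1 hX
  have memset : ∀ v ∈ ({S.xi, S.xiA 0, S.xiA 1, S.xiA 2,
      S.phi (S.xiA 0), S.phi (S.xiA 1), S.phi (S.xiA 2)} : Set V), ⟪v, X⟫ = 0 :=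
    fun v hv => g v (Submodule.subset_span hv)
  have hx : ⟪S.xi, X⟫ = 0 := memset _ (by simp)
  have ha0 : ⟪S.xiA 0, X⟫ = 0 := memset _ (by simp)
  have ha1 : ⟪S.xiA 1, X⟫ = 0 := memset _ (by simp)
  have ha2 : ⟪S.xiA 2, X⟫ = 0 := memset _ (by simp)
  have hp0 : ⟪S.phi (S.xiA 0), X⟫ = 0 := memset _ (by simp)
  have hp1 : ⟪S.phi (S.xiA 1), X⟫ = 0 := memset _ (by simp)
  have hp2 : ⟪S.phi (S.xiA 2), X⟫ = 0 := memset _ (by simp)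
  rw [jacobi_eq S h, Fin.sum_univ_three]
  rw [hx, ha0, ha1, ha2, hp0, hp1, hp2]
  simp

end Main

/-- Assume `η(ξ_a) = 0` for all `a ∈ {1,2,3}`.  Then the normal Jacobi operator
`R̂_N` has exactly the eigenvalues `0`, `4` and `1`, with corresponding eigenspaces
`T₀ = span{φξ₁, φξ₂, φξ₃}`, `T₄ = span{ξ, ξ₁, ξ₂, ξ₃}` and `T₁ = H`, and `V` is the orthogonal
direct sum `T₀ ⊕ T₄ ⊕ T₁` (assuming `H ≠ 0`). -/
theorem jacobi_eigen_decomposition [FiniteDimensional ℝ V] (S : ACMS3 V)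
    (h : ∀ a, ⟪S.xi, S.xiA a⟫ = 0) (hH : S.H ≠ ⊥) :
    (∀ X ∈ Submodule.span ℝ {S.phi (S.xiA 0), S.phi (S.xiA 1), S.phi (S.xiA 2)},
      S.jacobi X = 0) ∧
    (∀ X ∈ Submodule.span ℝ {S.xi, S.xiA 0, S.xiA 1, S.xiA 2}, S.jacobi X = (4 : ℝ) • X) ∧
    (∀ X ∈ S.H, S.jacobi X = X) ∧
    (Submodule.span ℝ {S.phi (S.xiA 0), S.phi (S.xiA 1), S.phi (S.xiA 2)} ≠ ⊥ ∧
      Submodule.span ℝ {S.xi, S.xiA 0, S.xiA 1, S.xiA 2} ≠ ⊥ ∧ S.H ≠ ⊥) ∧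
    (∀ (lam : ℝ) (X : V), X ≠ 0 → S.jacobi X = lam • X → lam = 0 ∨ lam = 4 ∨ lam = 1) ∧
    (∀ x ∈ Submodule.span ℝ {S.phi (S.xiA 0), S.phi (S.xiA 1), S.phi (S.xiA 2)},
      ∀ y ∈ Submodule.span ℝ {S.xi, S.xiA 0, S.xiA 1, S.xiA 2}, ⟪x, y⟫ = 0) ∧
    (∀ x ∈ Submodule.span ℝ {S.phi (S.xiA 0), S.phi (S.xiA 1), S.phi (S.xiA 2)},
      ∀ z ∈ S.H, ⟪x, z⟫ = 0) ∧
    (∀ y ∈ Submodule.span ℝ {S.xi, S.xiA 0, S.xiA 1, S.xiA 2}, ∀ z ∈ S.H, ⟪y, z⟫ = 0) ∧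
    Submodule.span ℝ {S.phi (S.xiA 0), S.phi (S.xiA 1), S.phi (S.xiA 2)} ⊔
      Submodule.span ℝ {S.xi, S.xiA 0, S.xiA 1, S.xiA 2} ⊔ S.H = ⊤ := by
  have hxine : S.xi ≠ 0 := by
    intro e
    have := S.xi_unit
    rw [e, norm_zero] at this
    norm_num at this
  have hphi0ne : S.phi (S.xiA 0) ≠ 0 := by
    intro e
    have h1 : ⟪S.phi (S.xiA 0), S.phi (S.xiA 0)⟫ = 1 := by
      rw [ip_phia_phib S h, ip_aa]
    rw [e, inner_zero_left] at h1
    norm_num at h1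
  refine ⟨?_, ?_, fun X hX => jacobi_H S h hX, ?_, ?_, ?_, ?_, ?_, ?_⟩
  · -- T0
    intro X hX
    induction hX using Submodule.span_induction with
    | mem x hxs =>
      simp only [Set.mem_insert_iff, Set.mem_singleton_iff] at hxs
      rcases hxs with rfl | rfl | rfl
      exacts [jacobi_phixiA S h 0, jacobi_phixiA S h 1, jacobi_phixiA S h 2]
    | zero => exact jacobi_zero S
    | add x y _ _ ix iy => rw [jacobi_add, ix, iy, add_zero]
    | smul r x _ ix => rw [jacobi_smul, ix, smul_zero]
  · -- T4
    intro X hX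
    induction hX using Submodule.span_induction with
    | mem x hxs =>
      simp only [Set.mem_insert_iff, Set.mem_singleton_iff] at hxs
      rcases hxs with rfl | rfl | rfl | rfl
      exacts [jacobi_xi S h, jacobi_xiA S h 0, jacobi_xiA S h 1, jacobi_xiA S h 2]
    | zero => rw [jacobi_zero, smul_zero]
    | add x y _ _ ix iy => rw [jacobi_add, ix, iy, smul_add]
    | smul r x _ ix => rw [jacobi_smul, ix, smul_comm]
  · -- nonbot
    refine ⟨?_, ?_, hH⟩
    · rw [Submodule.ne_bot_iff]
      exact ⟨S.phi (S.xiA 0), Submodule.subset_span (by simp), hphi0ne⟩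
    · rw [Submodule.ne_bot_iff]
      exact ⟨S.xi, Submodule.subset_span (by simp), hxine⟩
  · -- eigenvalues
    intro lam X hX0 hEq
    by_contra hcon
    push_neg at hcon
    obtain ⟨hl0, hl4, hl1⟩ := hcon
    have key : ∀ W : V, ⟪W, S.jacobi X⟫ = lam * ⟪W, X⟫ := fun W => by
      rw [hEq, real_inner_smul_right]
    have solve4 : ∀ t : ℝ, 4 * t = lam * t → t = 0 := by
      intro t ht
      rcases mul_eq_zero.1 (show (4 - lam) * t = 0 by ring_nf; linarith) with hh | hh
      · exact absurd (by linarith : lam = 4) hl4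
      · exact hh
    have solve0 : ∀ t : ℝ, (0:ℝ) = lam * t → t = 0 := by
      intro t ht
      rcases mul_eq_zero.1 ht.symm with hh | hh
      · exact absurd hh hl0
      · exact hh
    have hx : ⟪S.xi, X⟫ = 0 := by
      apply solve4
      rw [← key S.xi, jacobi_eq S h, Fin.sum_univ_three]
      simp only [inner_add_right, inner_sub_right, real_inner_smul_right,
        ip_xx, h, ip_x_phib, mul_zero, mul_one]
      ring
    have ha : ∀ a, ⟪S.xiA a, X⟫ = 0 := by
      have q0 : ⟪S.xiA 0, X⟫ = 0 := by
        apply solve4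
        rw [← key (S.xiA 0), jacobi_eq S h, Fin.sum_univ_three]
        simp only [inner_add_right, inner_sub_right, real_inner_smul_right,
          ip_aa, ip01, ip02, ip10, ip12, ip20, ip21, ip_ax S h,
          ip_a_phib S h, mul_zero, mul_one]
        ring
      have q1 : ⟪S.xiA 1, X⟫ = 0 := by
        apply solve4
        rw [← key (S.xiA 1), jacobi_eq S h, Fin.sum_univ_three]
        simp only [inner_add_right, inner_sub_right, real_inner_smul_right,
          ip_aa, ip01, ip02, ip10, ip12, ip20, ip21, ip_ax S h,
          ip_a_phib S h, mul_zero, mul_one]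
        ring
      have q2 : ⟪S.xiA 2, X⟫ = 0 := by
        apply solve4
        rw [← key (S.xiA 2), jacobi_eq S h, Fin.sum_univ_three]
        simp only [inner_add_right, inner_sub_right, real_inner_smul_right,
          ip_aa, ip01, ip02, ip10, ip12, ip20, ip21, ip_ax S h,
          ip_a_phib S h, mul_zero, mul_one]
        ring
      intro a; fin_cases a
      exacts [q0, q1, q2]
    have hp : ∀ a, ⟪S.phi (S.xiA a), X⟫ = 0 := by
      have q0 : ⟪S.phi (S.xiA 0), X⟫ = 0 := by
        apply solve0
        rw [← key (S.phi (S.xiA 0)), jacobi_eq S h, Fin.sum_univ_three]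
        simp only [inner_add_right, inner_sub_right, real_inner_smul_right,
          ip_phia_phib S h, ip_aa, ip01, ip02, ip10, ip12, ip20, ip21,
          ip_phib_x, ip_phib_a S h, mul_zero, mul_one]
        ring
      have q1 : ⟪S.phi (S.xiA 1), X⟫ = 0 := by
        apply solve0
        rw [← key (S.phi (S.xiA 1)), jacobi_eq S h, Fin.sum_univ_three]
        simp only [inner_add_right, inner_sub_right, real_inner_smul_right,
          ip_phia_phib S h, ip_aa, ip01, ip02, ip10, ip12, ip20, ip21,
          ip_phib_x, ip_phib_a S h, mul_zero, mul_one]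
        ring
      have q2 : ⟪S.phi (S.xiA 2), X⟫ = 0 := by
        apply solve0
        rw [← key (S.phi (S.xiA 2)), jacobi_eq S h, Fin.sum_univ_three]
        simp only [inner_add_right, inner_sub_right, real_inner_smul_right,
          ip_phia_phib S h, ip_aa, ip01, ip02, ip10, ip12, ip20, ip21,
          ip_phib_x, ip_phib_a S h, mul_zero, mul_one]
        ring
      intro a; fin_cases a
      exacts [q0, q1, q2]
    have hXH : X ∈ S.H := mem_H_of_inner S hx ha hp
    have hj : S.jacobi X = X := jacobi_H S h hXH
    have : (lam - 1) • X = 0 := by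
      rw [sub_smul, one_smul, ← hEq, hj, sub_self]
    rcases smul_eq_zero.1 this with hh | hh
    · exact hl1 (by linarith [sub_eq_zero.1 hh])
    · exact hX0 hh
  · -- T0 ⟂ T4
    apply inner_span_span_zero
    intro x hx y hy
    simp only [Set.mem_insert_iff, Set.mem_singleton_iff] at hx hy
    rcases hx with rfl | rfl | rfl <;> rcases hy with rfl | rfl | rfl | rfl <;>
      first
        | exact ip_phib_x S _
        | exact ip_phib_a S h _ _
  · -- T0 ⟂ H
    intro x hx z hz
    have hx' : x ∈ S.Hperp := by
      refine Submodule.span_mono ?_ hx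
      intro v hv
      simp only [Set.mem_insert_iff, Set.mem_singleton_iff] at hv ⊢
      tauto
    exact (Submodule.mem_orthogonal _ _).1 hz x hx'
  · -- T4 ⟂ H
    intro y hy z hz
    have hy' : y ∈ S.Hperp := by
      refine Submodule.span_mono ?_ hy
      intro v hv
      simp only [Set.mem_insert_iff, Set.mem_singleton_iff] at hv ⊢
      tauto
    exact (Submodule.mem_orthogonal _ _).1 hz y hy'
  · -- sup = ⊤
    have hset : ({S.phi (S.xiA 0), S.phi (S.xiA 1), S.phi (S.xiA 2)} : Set V) ∪
        {S.xi, S.xiA 0, S.xiA 1, S.xiA 2} =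
        {S.xi, S.xiA 0, S.xiA 1, S.xiA 2,
          S.phi (S.xiA 0), S.phi (S.xiA 1), S.phi (S.xiA 2)} := by
      ext v
      simp only [Set.mem_union, Set.mem_insert_iff, Set.mem_singleton_iff]
      tauto
    rw [← Submodule.span_union, hset]
    show S.Hperp ⊔ S.H = ⊤
    exact Submodule.sup_orthogonal_of_hasOrthogonalProjection
end

section
/- Assume η(ξ₂) = η(ξ₃) = 0. Then every Z ∈ H₁(1) satisfies R̂_N Z = (1 − η(ξ₁)) Z and every W ∈ H₁(−1) satisfies R̂_N W = (1 + η(ξ₁)) W; in particular, if η(ξ₁) ≠ 0 these two eigenvalues of R̂_N are distinct. -/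
open RealInnerProductSpace

variable {V : Type*} [NormedAddCommGroup V] [InnerProductSpace ℝ V]

lemma ACMS3.inner_xi_self (S : ACMS3 V) : ⟪S.xi, S.xi⟫ = 1 := by
  rw [real_inner_self_eq_norm_sq, S.xi_unit]; norm_num

lemma ACMS3.eta_phi_s13 (S : ACMS3 V) (X : V) : ⟪S.xi, S.phi X⟫ = 0 := by
  have h1 := S.phi_metric (S.phi X) (S.phi X)
  rw [S.phi_sq] at h1
  have h2 := S.phi_metric X X
  have hx := S.inner_xi_self
  have hL : ⟪-X + ⟪S.xi, X⟫ • S.xi, -X + ⟪S.xi, X⟫ • S.xi⟫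
      = ⟪X, X⟫ - ⟪S.xi, X⟫ * ⟪S.xi, X⟫ := by
    simp [-inner_self_eq_norm_sq_to_K, inner_add_left, inner_add_right, inner_smul_left, inner_smul_right,
      inner_neg_left, inner_neg_right, hx, real_inner_comm X S.xi]
    ring
  rw [hL, h2] at h1
  have : ⟪S.xi, S.phi X⟫ * ⟪S.xi, S.phi X⟫ = 0 := by linarith
  exact mul_self_eq_zero.mp this

lemma ACMS3.phi_skew (S : ACMS3 V) (X Y : V) : ⟪S.phi X, Y⟫ = -⟪X, S.phi Y⟫ := by
  have h := S.phi_metric X (S.phi Y)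
  rw [S.phi_sq, S.eta_phi_s13, mul_zero, sub_zero] at h
  have hx : ⟪S.phi X, S.xi⟫ = 0 := by rw [real_inner_comm]; exact S.eta_phi_s13 X
  rw [inner_add_right, inner_neg_right, inner_smul_right, hx, mul_zero, add_zero] at h
  linarith

lemma jacobi_eigen_aux (S : ACMS3 V) (h2 : ⟪S.xi, S.xiA 1⟫ = 0)
    (h3 : ⟪S.xi, S.xiA 2⟫ = 0) (ε : ℝ) (Z : V) (hZ : Z ∈ S.eigenH 0 ε) :
    S.jacobi Z = (1 - ε * ⟪S.xi, S.xiA 0⟫) • Z := by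
  obtain ⟨hH, hE⟩ := hZ
  have hE' : S.theta 0 Z = ε • Z := Module.End.mem_eigenspace_iff.mp hE
  have hgen : ∀ x ∈ ({S.xi, S.xiA 0, S.xiA 1, S.xiA 2,
      S.phi (S.xiA 0), S.phi (S.xiA 1), S.phi (S.xiA 2)} : Set V), ⟪x, Z⟫ = 0 := by
    intro x hx
    exact (Submodule.mem_orthogonal _ _).mp hH x (Submodule.subset_span hx)
  have e0 : ⟪S.xi, Z⟫ = 0 := hgen _ (by simp)
  have e1 : ⟪S.xiA 0, Z⟫ = 0 := hgen _ (by simp)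
  have e2 : ⟪S.xiA 1, Z⟫ = 0 := hgen _ (by simp)
  have e3 : ⟪S.xiA 2, Z⟫ = 0 := hgen _ (by simp)
  have f0 : ⟪S.xiA 0, S.phi Z⟫ = 0 := by
    have := S.phi_skew (S.xiA 0) Z
    have h := hgen (S.phi (S.xiA 0)) (by simp)
    linarith
  have f1 : ⟪S.xiA 1, S.phi Z⟫ = 0 := by
    have := S.phi_skew (S.xiA 1) Z
    have h := hgen (S.phi (S.xiA 1)) (by simp)
    linarith
  have f2 : ⟪S.xiA 2, S.phi Z⟫ = 0 := by
    have := S.phi_skew (S.xiA 2) Z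
    have h := hgen (S.phi (S.xiA 2)) (by simp)
    linarith
  simp only [ACMS3.jacobi, Fin.sum_univ_three, e0, e1, e2, e3, f0, f1, f2, h2, h3, hE',
    mul_zero, zero_smul, smul_zero, add_zero, sub_zero, zero_sub, zero_add, smul_smul]
  module

/-- Assume `η(ξ₂) = η(ξ₃) = 0`.  Then every `Z ∈ H₁(1)` satisfies
`R̂_N Z = (1 − η(ξ₁)) Z` and every `W ∈ H₁(−1)` satisfies `R̂_N W = (1 + η(ξ₁)) W`; in
particular, if `η(ξ₁) ≠ 0` these two eigenvalues of `R̂_N` are distinct. -/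
theorem jacobi_on_eigenH_one [FiniteDimensional ℝ V] (S : ACMS3 V)
    (h2 : ⟪S.xi, S.xiA 1⟫ = 0) (h3 : ⟪S.xi, S.xiA 2⟫ = 0) :
    (∀ Z ∈ S.eigenH 0 1, S.jacobi Z = (1 - ⟪S.xi, S.xiA 0⟫) • Z) ∧
    (∀ W ∈ S.eigenH 0 (-1), S.jacobi W = (1 + ⟪S.xi, S.xiA 0⟫) • W) ∧
    (⟪S.xi, S.xiA 0⟫ ≠ 0 → (1 - ⟪S.xi, S.xiA 0⟫ : ℝ) ≠ (1 + ⟪S.xi, S.xiA 0⟫ : ℝ)) := by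
  refine ⟨fun Z hZ => ?_, fun W hW => ?_, fun h hc => h (by linarith)⟩
  · rw [jacobi_eigen_aux S h2 h3 1 Z hZ]; ring_nf
  · rw [jacobi_eigen_aux S h2 h3 (-1) W hW]; ring_nf
end

section
/- Let V be a real inner product space, S a symmetric endomorphism of V, f ∈ ℝ, and R : V × V → End(V) a map satisfying the pseudo-parallelism identity R(X,Y)∘S − S∘R(X,Y) = f·((X∧Y)∘S − S∘(X∧Y)) for all X, Y ∈ V. If Z, W ∈ V are eigenvectors of S with eigenvalues λ and μ respectively and λ ≠ μ, then ⟨R(X,Y)Z, W⟩ = f·(⟨Y,Z⟩⟨X,W⟩ − ⟨X,Z⟩⟨Y,W⟩) for all X, Y ∈ V. -/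
open RealInnerProductSpace

/-- The endomorphism `X ∧ Y` of `V`, defined by `(X ∧ Y)Z := ⟨Y,Z⟩X − ⟨X,Z⟩Y. -/
noncomputable def wedge {V : Type*} [NormedAddCommGroup V] [InnerProductSpace ℝ V]
    (X Y Z : V) : V :=
  ⟪Y, Z⟫ • X - ⟪X, Z⟫ • Y

theorem pseudoparallel_inner_eigenvectors
    {V : Type*} [NormedAddCommGroup V] [InnerProductSpace ℝ V]
    (S : V →ₗ[ℝ] V) (hS : ∀ X Y : V, ⟪S X, Y⟫ = ⟪X, S Y⟫) (f : ℝ)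
    (R : V → V → (V →ₗ[ℝ] V))
    (hpp : ∀ X Y Z : V,
      R X Y (S Z) - S (R X Y Z) = f • (wedge X Y (S Z) - S (wedge X Y Z)))
    (Z W : V) (lam mu : ℝ) (hZ : S Z = lam • Z) (hW : S W = mu • W) (hne : lam ≠ mu) :
    ∀ X Y : V, ⟪R X Y Z, W⟫ = f * (⟪Y, Z⟫ * ⟪X, W⟫ - ⟪X, Z⟫ * ⟪Y, W⟫) := by
  intro X Y
  have key := congrArg (fun v => ⟪v, W⟫) (hpp X Y Z)
  simp only [hZ] at key
  have hSw : S (wedge X Y Z) = ⟪Y, Z⟫ • S X - ⟪X, Z⟫ • S Y := by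
    simp [wedge, map_sub, map_smul]
  have hwz : wedge X Y (lam • Z) = lam • wedge X Y Z := by
    simp [wedge, inner_smul_right, smul_smul, smul_sub, mul_comm]
  rw [hwz, hSw] at key
  have h1 : ⟪S (R X Y Z), W⟫ = mu * ⟪R X Y Z, W⟫ := by
    rw [hS, hW, real_inner_smul_right]
  have h2 : ⟪S X, W⟫ = mu * ⟪X, W⟫ := by rw [hS, hW, real_inner_smul_right]
  have h3 : ⟪S Y, W⟫ = mu * ⟪Y, W⟫ := by rw [hS, hW, real_inner_smul_right]
  have hRlam : (R X Y) (lam • Z) = lam • (R X Y Z) := map_smul _ _ _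
  rw [hRlam] at key
  simp only [inner_sub_left, inner_smul_left, real_inner_smul_left, h1, h2, h3,
    wedge, inner_sub_left, real_inner_smul_left, RCLike.inner_apply, conj_trivial] at key
  have hfac : (lam - mu) * ⟪R X Y Z, W⟫ =
      (lam - mu) * (f * (⟪Y, Z⟫ * ⟪X, W⟫ - ⟪X, Z⟫ * ⟪Y, W⟫)) := by ring_nf; ring_nf at key; linarith
  exact mul_left_cancel₀ (sub_ne_zero.mpr hne) hfac
end
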